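/- arXiv:1806.02526 — 2 statements merged into one kernel-verified Lean document; each statement's English description precedes it below -/
import Mathlib

section
/- Let K be a field, V and W vector spaces over K, M an additive commutative group, and ρ : M →+ ℤ an additive homomorphism. Let (V_k)_{k∈ι} be a family of K-subspaces of V together with weights u : ι → M, and (W_l)_{l∈κ} a family of K-subspaces of W together with weights v : κ → M. Define the filtrations V^ρ(p) = ⨆_{k : ρ(u k) ≥ p} V_k and W^ρ(q) = ⨆_{l : ρ(v l) ≥ q} W_l, and inside V ⊗_K W set (V⊗W)^ρ(j) = ⨆_{(k,l) : ρ(u k) + ρ(v l) ≥ j} T(V_k, W_l). Then for every j ∈ ℤ one has (V⊗W)^ρ(j) = ⨆_{p ∈ ℤ} T(V^ρ(p), W^ρ(j−p)). -/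
open TensorProduct

/-- The image of `P ⊗ Q` in `V ⊗[K] W`: the span of elementary tensors `p ⊗ q`. -/
noncomputable def tensorSpan (K : Type*) [Field K] {V W : Type*} [AddCommGroup V] [Module K V]
    [AddCommGroup W] [Module K W] (P : Submodule K V) (Q : Submodule K W) :
    Submodule K (V ⊗[K] W) :=
  Submodule.map₂ (TensorProduct.mk K V W) P Q

theorem tensorSpan_mono (K : Type*) [Field K] {V W : Type*} [AddCommGroup V] [Module K V]
    [AddCommGroup W] [Module K W] {P P' : Submodule K V} {Q Q' : Submodule K W}
    (hP : P ≤ P') (hQ : Q ≤ Q') : tensorSpan K P Q ≤ tensorSpan K P' Q' :=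
  Submodule.map₂_le_map₂ hP hQ

/-- The tensor-product filtration of the filtrations induced by weighted families of
subspaces is again induced by the tensor family with added weights. -/
theorem tensor_filtration_eq_sum_of_filtrations
    (K : Type*) [Field K] (V W : Type*) [AddCommGroup V] [Module K V]
    [AddCommGroup W] [Module K W]
    (M : Type*) [AddCommGroup M] (ρ : M →+ ℤ)
    {ι κ : Type*} (Vfam : ι → Submodule K V) (u : ι → M)
    (Wfam : κ → Submodule K W) (v : κ → M) (j : ℤ) :
    (⨆ (kl : ι × κ) (_ : ρ (u kl.1) + ρ (v kl.2) ≥ j),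
        tensorSpan K (Vfam kl.1) (Wfam kl.2)) =
      ⨆ p : ℤ,
        tensorSpan K (⨆ (k : ι) (_ : ρ (u k) ≥ p), Vfam k)
          (⨆ (l : κ) (_ : ρ (v l) ≥ j - p), Wfam l) := by
  apply le_antisymm
  · refine iSup₂_le fun kl h => ?_
    refine le_trans ?_ (le_iSup _ (ρ (u kl.1)))
    refine tensorSpan_mono K ?_ ?_
    · exact le_iSup₂ (f := fun k (_ : ρ (u k) ≥ ρ (u kl.1)) => Vfam k) kl.1 le_rfl
    · exact le_iSup₂ (f := fun l (_ : ρ (v l) ≥ j - ρ (u kl.1)) => Wfam l) kl.2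
        (by omega)
  · refine iSup_le fun p => ?_
    rw [tensorSpan, Submodule.map₂_iSup_left]
    refine iSup_le fun k => ?_
    rw [Submodule.map₂_iSup_right]
    refine iSup_le fun l => ?_
    rcases le_or_gt p (ρ (u k)) with hk | hk
    · rcases le_or_gt (j - p) (ρ (v l)) with hl | hl
      · rw [iSup_pos hk, iSup_pos hl]
        exact le_iSup₂ (f := fun kl (_ : ρ (u kl.1) + ρ (v kl.2) ≥ j)
          => tensorSpan K (Vfam kl.1) (Wfam kl.2)) (k, l) (by dsimp; omega)
      · rw [iSup_neg (by omega : ¬ ρ (v l) ≥ j - p), Submodule.map₂_bot_right]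
        exact bot_le
    · rw [iSup_neg (by omega : ¬ ρ (u k) ≥ p), Submodule.map₂_bot_left]
      exact bot_le
end

section
/- Let K be a field, V and W vector spaces over K, and M an additive commutative group. Suppose (V_c)_{c∈M} is an internal direct sum decomposition of V by K-subspaces and (W_c)_{c∈M} is an internal direct sum decomposition of W. For c ∈ M define the subspace (V⊗W)_c = ⨆_{c₁ + c₂ = c} T(V_{c₁}, W_{c₂}) of V ⊗_K W. Then the family ((V⊗W)_c)_{c∈M} is an internal direct sum decomposition of V ⊗_K W. -/
open TensorProduct

section Aux

variable {R N ι M' : Type*} [Ring R] [AddCommGroup N] [Module R N] [DecidableEq ι]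

/-- For an independent family of submodules, the biSups over "disjoint" predicates
are disjoint. -/
lemma aux_disjoint_biSup {S : ι → Submodule R N} (hS : iSupIndep S)
    {p q : ι → Prop} [DecidablePred p] [DecidablePred q]
    (hpq : ∀ i, p i → q i → False) :
    Disjoint (⨆ (i) (_ : p i), S i) (⨆ (i) (_ : q i), S i) := by
  rw [Submodule.disjoint_def]
  intro x hx hy
  rw [Submodule.mem_biSup_iff_exists_dfinsupp] at hx hy
  obtain ⟨f, hf⟩ := hx
  obtain ⟨g, hg⟩ := hy
  have hinj := hS.dfinsupp_lsum_injective
  have hfg : f.filter p = g.filter q := hinj (by rw [hf, hg])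
  have hzero : f.filter p = 0 := by
    ext i
    by_cases hpi : p i
    · have h2 : (g.filter q) i = 0 :=
        DFinsupp.filter_apply_neg g (fun hqi => hpq i hpi hqi)
      have : (f.filter p) i = 0 := hfg ▸ h2
      rw [this, DFinsupp.zero_apply]
    · rw [DFinsupp.filter_apply_neg f hpi, DFinsupp.zero_apply]
  rw [← hf, hzero, map_zero]

/-- Regrouping an independent family of submodules along the fibers of a map
gives an independent family. -/
lemma aux_regroup {S : ι → Submodule R N} (hS : iSupIndep S) (f : ι → M')
    [DecidableEq M'] :
    iSupIndep (fun c : M' => ⨆ (i) (_ : f i = c), S i) := by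
  intro c
  have hrhs : (⨆ (c' : M') (_ : c' ≠ c), ⨆ (i) (_ : f i = c'), S i)
      = ⨆ (i) (_ : f i ≠ c), S i := by
    apply le_antisymm
    · refine iSup₂_le fun c' hc' => iSup₂_le fun i hi => ?_
      exact le_iSup₂ (f := fun i (_ : f i ≠ c) => S i) i (hi ▸ hc')
    · refine iSup₂_le fun i hi => ?_
      refine le_trans ?_ (le_iSup₂ (f := fun c' (_ : c' ≠ c) =>
        ⨆ (i) (_ : f i = c'), S i) (f i) hi)
      exact le_iSup₂ (f := fun j (_ : f j = f i) => S j) i rfl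
  rw [hrhs]
  exact aux_disjoint_biSup hS (fun i h1 h2 => h2 h1)

end Aux

section Proj

variable {K : Type*} [Field K] {V : Type*} [AddCommGroup V] [Module K V]

/-- From an internal decomposition, a projection onto the `a`-component:
identity on `Vfam a`, zero on each `Vfam c`, `c ≠ a`. -/
lemma exists_proj {M : Type*} (Vfam : M → Submodule K V)
    (hindep : iSupIndep Vfam) (htop : (⨆ c, Vfam c) = ⊤) (a : M) :
    ∃ π : V →ₗ[K] V, (∀ v ∈ Vfam a, π v = v) ∧ (∀ c ≠ a, ∀ v ∈ Vfam c, π v = 0) := by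
  have hcompl : IsCompl (Vfam a) (⨆ (c) (_ : c ≠ a), Vfam c) := by
    constructor
    · exact hindep a
    · rw [codisjoint_iff, ← iSup_split_single Vfam a, htop]
  refine ⟨(Vfam a).subtype ∘ₗ (Vfam a).projectionOnto _ hcompl, ?_, ?_⟩
  · intro v hv
    simp [Submodule.projectionOnto_apply_of_mem_left hcompl hv]
  · intro c hc v hv
    have hv' : v ∈ ⨆ (c) (_ : c ≠ a), Vfam c :=
      (le_iSup₂ (f := fun c (_ : c ≠ a) => Vfam c) c hc) hv
    simp [Submodule.projectionOnto_apply_of_mem_right hcompl hv']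

end Proj

/-- If `V = ⨁_{c ∈ M} V_c` and `W = ⨁_{c ∈ M} W_c` are internal direct-sum decompositions
by subspaces indexed by an additive commutative group `M`, then setting
`(V ⊗ W)_c = ⨆_{c₁ + c₂ = c} T(V_{c₁}, W_{c₂})` gives an internal direct-sum
decomposition of `V ⊗[K] W`. -/
theorem tensor_decomposition_of_decompositions
    (K : Type*) [Field K] (V W : Type*) [AddCommGroup V] [Module K V]
    [AddCommGroup W] [Module K W]
    (M : Type*) [AddCommGroup M]
    (Vfam : M → Submodule K V) (Wfam : M → Submodule K W)
    (hVindep : iSupIndep Vfam) (hVtop : (⨆ c, Vfam c) = ⊤)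
    (hWindep : iSupIndep Wfam) (hWtop : (⨆ c, Wfam c) = ⊤) :
    iSupIndep (fun c : M =>
        ⨆ (p : M × M) (_ : p.1 + p.2 = c), tensorSpan K (Vfam p.1) (Wfam p.2)) ∧
      (⨆ c : M, ⨆ (p : M × M) (_ : p.1 + p.2 = c),
          tensorSpan K (Vfam p.1) (Wfam p.2)) = ⊤ := by
  classical
  set S : M × M → Submodule K (V ⊗[K] W) :=
    fun p => tensorSpan K (Vfam p.1) (Wfam p.2) with hS
  constructor
  · -- independence
    have hSindep : iSupIndep S := by
      intro p
      obtain ⟨π, hπ1, hπ0⟩ := exists_proj Vfam hVindep hVtop p.1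
      obtain ⟨ρ, hρ1, hρ0⟩ := exists_proj Wfam hWindep hWtop p.2
      set F : V ⊗[K] W →ₗ[K] V ⊗[K] W := TensorProduct.map π ρ with hF
      have hid : ∀ x ∈ S p, F x = x := by
        intro x hx
        have : S p ≤ LinearMap.ker (F - LinearMap.id) := by
          rw [hS]
          refine Submodule.map₂_le.2 fun m hm n hn => ?_
          simp only [LinearMap.mem_ker, LinearMap.sub_apply, LinearMap.id_apply,
            TensorProduct.mk_apply, hF, TensorProduct.map_tmul, hπ1 m hm, hρ1 n hn, sub_self]
        have := this hx
        simpa [sub_eq_zero] using this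
      have hker : (⨆ (q : M × M) (_ : q ≠ p), S q) ≤ LinearMap.ker F := by
        refine iSup₂_le fun q hq => ?_
        rw [hS]
        refine Submodule.map₂_le.2 fun m hm n hn => ?_
        have hcase : q.1 ≠ p.1 ∨ q.2 ≠ p.2 := by
          by_contra h
          push_neg at h
          exact hq (Prod.ext h.1 h.2)
        simp only [LinearMap.mem_ker, TensorProduct.mk_apply, hF, TensorProduct.map_tmul]
        rcases hcase with h | h
        · rw [hπ0 q.1 h m hm, TensorProduct.zero_tmul]
        · rw [hρ0 q.2 h n hn, TensorProduct.tmul_zero]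
      rw [Submodule.disjoint_def]
      intro x hx hy
      have h1 : F x = x := hid x hx
      have h2 : F x = 0 := hker hy
      rw [← h1, h2]
    exact aux_regroup hSindep (fun p => p.1 + p.2)
  · -- supremum is top
    have h1 : (⨆ c : M, ⨆ (p : M × M) (_ : p.1 + p.2 = c), S p) = ⨆ p : M × M, S p := by
      apply le_antisymm
      · exact iSup_le fun c => iSup₂_le fun p _ => le_iSup S p
      · refine iSup_le fun p => ?_
        have step1 : S p ≤ ⨆ (q : M × M) (_ : q.1 + q.2 = p.1 + p.2), S q :=
          le_iSup₂ (f := fun q (_ : q.1 + q.2 = p.1 + p.2) => S q) p rfl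
        exact step1.trans (le_iSup
          (fun c => ⨆ (q : M × M) (_ : q.1 + q.2 = c), S q) (p.1 + p.2))
    rw [h1]
    have h2 : (⨆ p : M × M, S p) = ⨆ a : M, ⨆ b : M, S (a, b) := by
      rw [iSup_prod]
    rw [h2]
    have h3 : ∀ a : M, (⨆ b : M, S (a, b))
        = Submodule.map₂ (TensorProduct.mk K V W) (Vfam a) ⊤ := by
      intro a
      rw [← hWtop, Submodule.map₂_iSup_right]
      rfl
    simp_rw [h3]
    rw [← Submodule.map₂_iSup_left, hVtop, TensorProduct.map₂_mk_top_top_eq_top]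
end
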